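/- For every natural number r ≥ 4, taking n = r, there exist r-disjoint uniformly bounded families U_0 and U_1 of subsets of as⊔_{i=n}^∞ X_{ω+1}^{(i,n)} such that U_0 ∪ U_1 covers as⊔_{i=n}^∞ X_{ω+1}^{(i,n)}. -/

import Mathlib

open Metric Set Filter ENNReal

noncomputable section

namespace AsympPaper

/-- The distance between two subsets of a (pseudo)metric space,
`d(A,B) = inf {dist a b : a ∈ A, b ∈ B}`, valued in `ℝ≥0∞` (it is `∞` if `A` or `B` is empty). -/
def setEDist {X : Type*} [PseudoMetricSpace X] (A B : Set X) : ℝ≥0∞ :=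
  ⨅ a ∈ A, ⨅ b ∈ B, edist a b

/-- A family `𝒰` of subsets of a metric space is `r`-disjoint if `d(U,V) > r`
for all distinct `U, V ∈ 𝒰`. -/
def RDisjoint {X : Type*} [PseudoMetricSpace X] (r : ℝ) (𝒰 : Set (Set X)) : Prop :=
  ∀ U ∈ 𝒰, ∀ V ∈ 𝒰, U ≠ V → ENNReal.ofReal r < setEDist U V

/-- A family `𝒰` of subsets of a metric space is uniformly bounded if
`sup {diam U : U ∈ 𝒰} < ∞`. -/
def UniformlyBdd {X : Type*} [PseudoMetricSpace X] (𝒰 : Set (Set X)) : Prop :=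
  ∃ R : ℝ, ∀ U ∈ 𝒰, ∀ x ∈ U, ∀ y ∈ U, dist x y ≤ R

/-- `Msub M σ` is the set `M^σ = {τ ∈ Fin ℕ : τ ∪ σ ∈ M and τ ∩ σ = ∅}`,
where `Fin ℕ` is the collection of finite nonempty subsets of `ℕ`. -/
def Msub (M : Set (Finset ℕ)) (σ : Finset ℕ) : Set (Finset ℕ) :=
  {τ | τ.Nonempty ∧ τ ∪ σ ∈ M ∧ τ ∩ σ = ∅}

/-- `OrdLE M α` is the relation `Ord M ≤ α`:  `Ord ∅ = 0` (so `Ord ∅ ≤ α` always), and for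
`M ≠ ∅`, `Ord M ≤ α` iff `Ord M^a < α` for every `a ∈ ℕ`. -/
def OrdLE (M : Set (Finset ℕ)) (α : Ordinal.{0}) : Prop :=
  M = ∅ ∨ ∀ a : ℕ, ∃ β : {β : Ordinal.{0} // β < α}, OrdLE (Msub M {a}) β.1
termination_by α
decreasing_by exact β.2

/-- `Ord M < α`. -/
def OrdLT (M : Set (Finset ℕ)) (α : Ordinal.{0}) : Prop := ∃ β < α, OrdLE M β

/-- `Ord M = α`. -/
def OrdEq (M : Set (Finset ℕ)) (α : Ordinal.{0}) : Prop := OrdLE M α ∧ ¬ OrdLT M α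

/-- `A(X)`: the set of finite nonempty `σ ⊆ ℕ` such that there are *no* uniformly bounded
families `𝒰 i` for `i ∈ σ`, each `𝒰 i` being `i`-disjoint, with `⋃_{i ∈ σ} 𝒰 i` covering `X`. -/
def AX (X : Type*) [PseudoMetricSpace X] : Set (Finset ℕ) :=
  {σ | σ.Nonempty ∧ ¬ ∃ 𝒰 : ℕ → Set (Set X),
      (∀ i ∈ σ, UniformlyBdd (𝒰 i) ∧ RDisjoint (i : ℝ) (𝒰 i)) ∧
      ∀ x : X, ∃ i ∈ σ, ∃ U ∈ 𝒰 i, x ∈ U}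

/-- `trasdim(X) ≤ γ`, i.e. `Ord A(X) ≤ γ`. -/
def TrasdimLE (X : Type*) [PseudoMetricSpace X] (γ : Ordinal.{0}) : Prop := OrdLE (AX X) γ

/-- `trasdim(X) = γ`, i.e. `Ord A(X) = γ`. -/
def TrasdimEq (X : Type*) [PseudoMetricSpace X] (γ : Ordinal.{0}) : Prop := OrdEq (AX X) γ

/-- Auxiliary for `coasdim`: `CoasdimLEAux A lam n` says `coasdim(A) ≤ lam + n` where `lam` is
a limit ordinal or `0` and `n ∈ ℕ`: for every `r > 0` there are `r`-disjoint uniformly bounded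
families `𝒰 0, …, 𝒰 n` of subsets of `A` such that `coasdim(A \ ⋃ i, ⋃₀ 𝒰 i) < lam`
(where `coasdim = -1` exactly for `∅`). -/
def CoasdimLEAux {X : Type*} [PseudoMetricSpace X] (A : Set X) (lam : Ordinal.{0}) (n : ℕ) :
    Prop :=
  ∀ r : ℝ, 0 < r → ∃ 𝒰 : Fin (n + 1) → Set (Set X),
    (∀ i, (∀ U ∈ 𝒰 i, U ⊆ A) ∧ UniformlyBdd (𝒰 i) ∧ RDisjoint r (𝒰 i)) ∧
    ((A \ ⋃ i, ⋃₀ 𝒰 i) = ∅ ∨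
      ∃ q : {q : Ordinal.{0} × ℕ // q.1 + q.2 < lam ∧ (q.1 = 0 ∨ Order.IsSuccLimit q.1)},
        CoasdimLEAux (A \ ⋃ i, ⋃₀ 𝒰 i) q.1.1 q.1.2)
termination_by lam
decreasing_by first
  | exact lt_of_le_of_lt le_self_add q.2.1
  | exact lt_of_le_of_lt (le_add_of_nonneg_right (zero_le _)) q.2.1

/-- `coasdim(A) ≤ γ` for a subset `A` of an ambient metric space (with the induced metric). -/
def CoasdimLE {X : Type*} [PseudoMetricSpace X] (A : Set X) (γ : Ordinal.{0}) : Prop :=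
  ∃ lam : Ordinal.{0}, ∃ n : ℕ, (lam = 0 ∨ Order.IsSuccLimit lam) ∧ γ = lam + n ∧ CoasdimLEAux A lam n

/-- `coasdim(A) = γ`. -/
def CoasdimEq {X : Type*} [PseudoMetricSpace X] (A : Set X) (γ : Ordinal.{0}) : Prop :=
  CoasdimLE A γ ∧ ∀ β < γ, ¬ CoasdimLE A β

/-- `1 + 2 + ⋯ + (i-1) = i(i-1)/2`, as a real number. -/
def triHalf (i : ℕ) : ℝ := ((i * (i - 1)) / 2 : ℕ)

/-- The asymptotic union `as⊔_{i=1}^∞ Z_i` of a sequence of subspaces `Z_i = S i` of an ambient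
metric space `Z` (indices with `S i = ∅` are vacuous; in particular take `S 0 = ∅` to start
the union at `i = 1`). A point is a pair `(i, x)` with `x ∈ S i`. -/
structure AsUnion {Z : Type*} (S : ℕ → Set Z) where
  idx : ℕ
  pt : S idx

/-- The metric of the asymptotic union: `d((l,x),(k,y)) = d_Z(x,y) + c` where, for `l ≤ k`,
`c = 0` if `l = k` and `c = l + (l+1) + ⋯ + (k-1)` if `l < k`. -/
instance AsUnion.instPseudoMetricSpace {Z : Type*} [PseudoMetricSpace Z] (S : ℕ → Set Z) :
    PseudoMetricSpace (AsUnion S) where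
  dist p q := dist (p.pt : Z) (q.pt : Z) + |triHalf p.idx - triHalf q.idx|
  dist_self p := by simp
  dist_comm p q := by
    show dist (p.pt : Z) (q.pt : Z) + |triHalf p.idx - triHalf q.idx|
      = dist (q.pt : Z) (p.pt : Z) + |triHalf q.idx - triHalf p.idx|
    rw [dist_comm, abs_sub_comm]
  dist_triangle p q r := by
    show dist (p.pt : Z) (r.pt : Z) + |triHalf p.idx - triHalf r.idx|
      ≤ (dist (p.pt : Z) (q.pt : Z) + |triHalf p.idx - triHalf q.idx|)
        + (dist (q.pt : Z) (r.pt : Z) + |triHalf q.idx - triHalf r.idx|)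
    have h1 := dist_triangle (p.pt : Z) (q.pt : Z) (r.pt : Z)
    have h2 := abs_sub_le (triHalf p.idx) (triHalf q.idx) (triHalf r.idx)
    linarith

/-- The ambient space `⊕ ℝ` of sequences, realized inside the bounded
functions `ℕ →ᵇ ℝ` with the sup-metric. -/
abbrev Amb : Type := BoundedContinuousFunction ℕ ℝ

/-- `t ∈ 2^n ℤ`. -/
def IsMultiple (n : ℕ) (t : ℝ) : Prop := ∃ m : ℤ, t = (m : ℝ) * 2 ^ n

/-- `X_{ω+k}^{(i,n)} = {x ∈ ℝ^i : #{j : x_j ∉ 2^n ℤ} ≤ k}`, realized as the subset of `⊕ ℝ`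
of sequences supported on the first `i` coordinates. -/
def XSet (k i n : ℕ) : Set Amb :=
  {f | (∀ j, i ≤ j → f j = 0) ∧ ({j | j < i ∧ ¬ IsMultiple n (f j)}).ncard ≤ k}

/-- `X_{ω+k} = as⊔_{i=1}^∞ X_{ω+k}^{(i)}` where `X_{ω+k}^{(i)} = X_{ω+k}^{(i,i)}`. -/
def XOmegaPlus (k : ℕ) : Type := AsUnion (fun i => if i = 0 then (∅ : Set Amb) else XSet k i i)

instance (k : ℕ) : PseudoMetricSpace (XOmegaPlus k) :=
  AsUnion.instPseudoMetricSpace _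

/-- `as⊔_{i=n}^∞ X_{ω+k}^{(i,n)}`. -/
def XTail (k n : ℕ) : Type := AsUnion (fun i => if i < n then (∅ : Set Amb) else XSet k i n)

instance (k n : ℕ) : PseudoMetricSpace (XTail k n) :=
  AsUnion.instPseudoMetricSpace _

/-- `Y_{ω+k}^{(i)} = {x ∈ (2^k ℤ)^i : #{j : x_j ∉ 2^i ℤ} ≤ k}` inside `⊕ ℝ`. -/
def YSet (k i : ℕ) : Set Amb :=
  {f | (∀ j, i ≤ j → f j = 0) ∧ (∀ j, j < i → IsMultiple k (f j)) ∧
    ({j | j < i ∧ ¬ IsMultiple i (f j)}).ncard ≤ k}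

/-- `Y_{ω+k} = as⊔_{i=1}^∞ Y_{ω+k}^{(i)}`. -/
def YOmegaPlus (k : ℕ) : Type := AsUnion (fun i => if i = 0 then (∅ : Set Amb) else YSet k i)

instance (k : ℕ) : PseudoMetricSpace (YOmegaPlus k) :=
  AsUnion.instPseudoMetricSpace _

/-- `ℝ^i` inside `⊕ ℝ`. -/
def RSet (i : ℕ) : Set Amb := {f | ∀ j, i ≤ j → f j = 0}

/-- The ambient space `as⊔_{i=1}^∞ ℝ^i`. -/
def AsR : Type := AsUnion (fun i => if i = 0 then (∅ : Set Amb) else RSet i)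

instance : PseudoMetricSpace AsR := AsUnion.instPseudoMetricSpace _

/-- `Y_{ω+k}` viewed as a subspace of `as⊔_{i=1}^∞ ℝ^i`. -/
def YSub (k : ℕ) : Set AsR := {p | (p.pt : Amb) ∈ YSet k p.idx}

/-- `Y_{2ω} = as⊔_{k=1}^∞ Y_{ω+k}`, the `Y_{ω+k}` being subspaces of `as⊔_{i=1}^∞ ℝ^i`. -/
def Y2Omega : Type := AsUnion (fun k => if k = 0 then (∅ : Set AsR) else YSub k)

instance : PseudoMetricSpace Y2Omega := AsUnion.instPseudoMetricSpace _

/-- A family covers the space. -/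
def Covers {X : Type*} (𝒰 : Set (Set X)) : Prop := ∀ x : X, ∃ U ∈ 𝒰, x ∈ U

/-- The Lebesgue number `L(𝒰) = inf_{x ∈ X} sup {r > 0 : ∃ U ∈ 𝒰, B(x,r) ⊆ U}`,
valued in `ℝ≥0∞`. -/
def lebesgueNum {X : Type*} [PseudoMetricSpace X] (𝒰 : Set (Set X)) : ℝ≥0∞ :=
  ⨅ x : X, sSup {e : ℝ≥0∞ | ∃ r : ℝ, 0 < r ∧ e = ENNReal.ofReal r ∧ ∃ U ∈ 𝒰, Metric.ball x r ⊆ U}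

/-- The multiplicity `m(𝒰)`: the maximal number of members of `𝒰` with nonempty
intersection, valued in `ℕ∞`. -/
def covMult {X : Type*} (𝒰 : Set (Set X)) : ℕ∞ :=
  sSup {m : ℕ∞ | ∃ t : Finset (Set X), ↑t ⊆ 𝒰 ∧ (⋂₀ (t : Set (Set X))).Nonempty ∧ m = t.card}

/-- The asymptotic dimension function
`ad_X(λ) = min {m(𝒰) : 𝒰 a uniformly bounded cover of X with L(𝒰) ≥ λ} - 1`. -/
def adim (X : Type*) [PseudoMetricSpace X] (lam : ℝ) : ℕ∞ :=
  sInf {m : ℕ∞ | ∃ 𝒰 : Set (Set X), UniformlyBdd 𝒰 ∧ Covers 𝒰 ∧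
    ENNReal.ofReal lam ≤ lebesgueNum 𝒰 ∧ m = covMult 𝒰} - 1

/-- `(2^k ℤ)^n` as a subset of `ℝ^n` (the latter carrying the sup-metric). -/
def grid (k n : ℕ) : Set (Fin n → ℝ) := {x | ∀ j, IsMultiple k (x j)}

/-- `g̃(r) = max {k ∈ ℕ : ad_{(2^k ℤ)^{g(r)}}(r) = g(r)}`. -/
def gtilde (g : ℝ → ℕ) (r : ℝ) : ℕ :=
  sSup {k : ℕ | adim (grid k (g r)) r = (g r : ℕ∞)}

/-- `(2^k ℤ)^n` realized inside `⊕ ℝ`: sequences supported on the first `n` coordinates,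
with those coordinates in `2^k ℤ`. -/
def gridSet (k n : ℕ) : Set Amb :=
  {f | (∀ j, n ≤ j → f j = 0) ∧ ∀ j, j < n → IsMultiple k (f j)}

/-- `X_ω(g) = as⊔_{i=1}^∞ (2^{g̃(i)} ℤ)^{g(i)}`. -/
def XOmegaG (g : ℝ → ℕ) : Type :=
  AsUnion (fun i => if i = 0 then (∅ : Set Amb) else gridSet (gtilde g (i : ℝ)) (g (i : ℝ)))

instance (g : ℝ → ℕ) : PseudoMetricSpace (XOmegaG g) := AsUnion.instPseudoMetricSpace _

/-- `f : X → Y` is a coarse equivalence: a coarse embedding with coarsely dense image. -/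
def IsCoarseEquiv {X Y : Type*} [PseudoMetricSpace X] [PseudoMetricSpace Y] (f : X → Y) : Prop :=
  (∃ p₁ p₂ : ℝ → ℝ, Monotone p₁ ∧ Monotone p₂ ∧
      Tendsto p₁ atTop atTop ∧ Tendsto p₂ atTop atTop ∧
      ∀ x₁ x₂ : X, p₁ (dist x₁ x₂) ≤ dist (f x₁) (f x₂) ∧ dist (f x₁) (f x₂) ≤ p₂ (dist x₁ x₂)) ∧
  ∃ R : ℝ, 0 < R ∧ ∀ y : Y, ∃ x : X, dist y (f x) < R

/-- A family `𝒳` (of subsets of an ambient space) is `r`-decomposable over a family `𝒴`: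
each `A ∈ 𝒳` splits as `A = A₀ ∪ A₁`, each `A_i` being an `r`-disjoint union of members
of a subfamily of `𝒴`. -/
def RDecomp {X : Type*} [PseudoMetricSpace X] (r : ℝ) (F G : Set (Set X)) : Prop :=
  ∀ A ∈ F, ∃ A₀ A₁ : Set X, A = A₀ ∪ A₁ ∧
    (∃ P ⊆ G, A₀ = ⋃₀ P ∧ RDisjoint r P) ∧
    (∃ P ⊆ G, A₁ = ⋃₀ P ∧ RDisjoint r P)

/-- `F ∈ D_α`, finite decomposition complexity: `D_0` consists of the bounded
families, and for `α > 0`, `F ∈ D_α` iff for every `r > 0` there are `β < α` and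
`G ∈ D_β` such that `F` is `r`-decomposable over `G`. -/
def InD {X : Type*} [PseudoMetricSpace X] (F : Set (Set X)) (α : Ordinal.{0}) : Prop :=
  if α = 0 then ∃ R : ℝ, ∀ A ∈ F, ∀ x ∈ A, ∀ y ∈ A, dist x y ≤ R
  else ∀ r : ℝ, 0 < r → ∃ β : {β : Ordinal.{0} // β < α},
    ∃ G : Set (Set X), InD G β.1 ∧ RDecomp r F G
termination_by α
decreasing_by exact β.2

end AsympPaper


open AsympPaper


namespace S3

variable {r : ℕ}

lemma triHalf_succ (n : ℕ) : triHalf (n + 1) = triHalf n + n := by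
  have key : (n + 1) * n / 2 = n * (n - 1) / 2 + n := by
    rw [← Nat.add_mul_div_left _ n (by norm_num : 0 < 2)]
    congr 1
    rcases n with _ | k
    · rfl
    · simp only [Nat.succ_sub_one]
      ring
  unfold triHalf
  simp only [Nat.add_sub_cancel]
  rw [key]
  push_cast
  ring

lemma triHalf_mono : Monotone triHalf := by
  apply monotone_nat_of_le_succ
  intro n
  rw [triHalf_succ]
  have : (0:ℝ) ≤ n := Nat.cast_nonneg n
  linarith

lemma triHalf_gap {l k : ℕ} (h : l < k) : (k : ℝ) - 1 ≤ triHalf k - triHalf l := by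
  obtain ⟨m, rfl⟩ : ∃ m, k = m + 1 := ⟨k - 1, by omega⟩
  have h1 : triHalf l ≤ triHalf m := triHalf_mono (by omega)
  rw [triHalf_succ]
  push_cast
  linarith

/-- cell size -/
def cc (r : ℕ) : ℝ := 2 ^ r
/-- star radius -/
def qq (r : ℕ) : ℝ := r + 1

lemma cc_nonneg : (0 : ℝ) ≤ cc r := by unfold cc; positivity

lemma cc_big (hr : 4 ≤ r) : 3 * (r : ℝ) + 3 ≤ cc r := by
  have key : ∀ n, 4 ≤ n → 3 * n + 3 ≤ 2 ^ n := by
    intro n hn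
    induction n, hn using Nat.le_induction with
    | base => norm_num
    | succ n hn ih =>
      have h2 : 2 ^ (n + 1) = 2 * 2 ^ n := by ring
      omega
  have := key r hr
  calc (3 * (r : ℝ) + 3) = ((3 * r + 3 : ℕ) : ℝ) := by push_cast; ring
    _ ≤ ((2 ^ r : ℕ) : ℝ) := Nat.cast_le.mpr this
    _ = cc r := by unfold cc; push_cast; ring

/-- class of a point: indices `r` and `r+1` are merged -/
def cls (p : XTail 1 r) : ℕ := max p.idx (r + 1)

lemma idx_ge (p : XTail 1 r) : r ≤ p.idx := by
  by_contra h
  have h2 : ∀ z : Amb, z ∈ (if p.idx < r then (∅ : Set Amb) else XSet 1 p.idx r) → False := by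
    intro z hz
    rw [if_pos (by omega : p.idx < r)] at hz
    exact absurd hz (Set.notMem_empty _)
  exact h2 _ p.pt.2

lemma pt_mem (p : XTail 1 r) : (p.pt : Amb) ∈ XSet 1 p.idx r := by
  have hge : ¬ p.idx < r := by have := idx_ge p; omega
  have h2 : ∀ z : Amb, z ∈ (if p.idx < r then (∅ : Set Amb) else XSet 1 p.idx r) →
      z ∈ XSet 1 p.idx r := by
    intro z hz
    rwa [if_neg hge] at hz
  exact h2 _ p.pt.2

lemma dist_eq' (p p' : XTail 1 r) :
    dist p p' = dist (p.pt : Amb) (p'.pt : Amb) + |triHalf p.idx - triHalf p'.idx| := rfl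

lemma coord_le (p p' : XTail 1 r) (j : ℕ) :
    |(p.pt : Amb) j - (p'.pt : Amb) j| ≤ dist p p' := by
  rw [dist_eq']
  have h1 : dist ((p.pt : Amb) j) ((p'.pt : Amb) j) ≤ dist (p.pt : Amb) (p'.pt : Amb) :=
    BoundedContinuousFunction.dist_coe_le_dist j
  rw [Real.dist_eq] at h1
  have h2 : (0:ℝ) ≤ |triHalf p.idx - triHalf p'.idx| := abs_nonneg _
  linarith

lemma cls_dist_aux {p p' : XTail 1 r} (h : cls p < cls p') : (r : ℝ) + 1 ≤ dist p p' := by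
  have hp : p.idx ≤ cls p := le_max_left _ _
  have hp1 : r + 1 ≤ cls p := le_max_right _ _
  have hp' : cls p' = p'.idx := by
    unfold cls at *
    omega
  have hlt : p.idx < p'.idx := by omega
  have hgap : (p'.idx : ℝ) - 1 ≤ triHalf p'.idx - triHalf p.idx := triHalf_gap hlt
  have hidx : (r : ℝ) + 2 ≤ (p'.idx : ℝ) := by
    have : r + 2 ≤ p'.idx := by omega
    exact_mod_cast this
  rw [dist_eq']
  have h1 : triHalf p'.idx - triHalf p.idx ≤ |triHalf p.idx - triHalf p'.idx| := by
    rw [abs_sub_comm]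
    exact le_abs_self _
  have h2 : (0:ℝ) ≤ dist (p.pt : Amb) (p'.pt : Amb) := dist_nonneg
  linarith

lemma cls_dist {p p' : XTail 1 r} (h : cls p ≠ cls p') : (r : ℝ) + 1 ≤ dist p p' := by
  rcases lt_or_gt_of_ne h with h' | h'
  · exact cls_dist_aux h'
  · rw [dist_comm]
    exact cls_dist_aux h'

lemma cls_tri {p p' : XTail 1 r} (h : cls p = cls p') :
    |triHalf p.idx - triHalf p'.idx| ≤ (r : ℝ) := by
  have h1 := idx_ge p
  have h2 := idx_ge p'
  have hc : p.idx = p'.idx ∨ (p.idx = r ∧ p'.idx = r + 1) ∨ (p.idx = r + 1 ∧ p'.idx = r) := by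
    unfold cls at h
    omega
  rcases hc with hc | ⟨ha, hb⟩ | ⟨ha, hb⟩
  · rw [hc]
    simp
  · rw [ha, hb, triHalf_succ,
      show triHalf r - (triHalf r + (r:ℝ)) = -(r:ℝ) by ring, abs_neg,
      abs_of_nonneg (by positivity)]
  · rw [ha, hb, triHalf_succ,
      show triHalf r + (r:ℝ) - triHalf r = (r:ℝ) by ring,
      abs_of_nonneg (by positivity)]

/-- star around the lattice point `g` (times `2^r`), in class `I` -/
def Star (r : ℕ) (I : ℕ) (g : ℕ → ℤ) : Set (XTail 1 r) :=
  {p | cls p = I ∧ ∀ j, |(p.pt : Amb) j - (g j : ℝ) * cc r| ≤ qq r}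

/-- middle segment: line through lattice points `a` off coordinate `j`, cell `m`, class `I` -/
def Mid (r : ℕ) (I : ℕ) (j : ℕ) (a : ℕ → ℤ) (m : ℤ) : Set (XTail 1 r) :=
  {p | cls p = I ∧ (∀ j', j' ≠ j → (p.pt : Amb) j' = (a j' : ℝ) * cc r) ∧
    (p.pt : Amb) j ∈ Set.Icc ((m : ℝ) * cc r + qq r) (((m : ℝ) + 1) * cc r - qq r)}

def U0 (r : ℕ) : Set (Set (XTail 1 r)) := {U | ∃ I g, U = Star r I g}
def U1 (r : ℕ) : Set (Set (XTail 1 r)) := {U | ∃ I j a m, U = Mid r I j a m}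

lemma rdisjoint_of_pointwise {U V : Set (XTail 1 r)}
    (h : ∀ x ∈ U, ∀ y ∈ V, (r : ℝ) + 1 ≤ dist x y) :
    ENNReal.ofReal (r : ℝ) < setEDist U V := by
  have h1 : ENNReal.ofReal (r : ℝ) < ENNReal.ofReal ((r : ℝ) + 1) := by
    rw [ENNReal.ofReal_lt_ofReal_iff (by positivity)]
    linarith
  refine lt_of_lt_of_le h1 ?_
  refine le_iInf₂ fun x hx => le_iInf₂ fun y hy => ?_
  rw [edist_dist]
  exact ENNReal.ofReal_le_ofReal (h x hx y hy)

lemma int_abs_one_le {b b' : ℤ} (h : b ≠ b') : (1 : ℝ) ≤ |(b : ℝ) - (b' : ℝ)| := by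
  have h3 : (1 : ℤ) ≤ |b - b'| := Int.one_le_abs (sub_ne_zero.mpr h)
  have h4 : ((1:ℤ) : ℝ) ≤ ((|b - b'| : ℤ) : ℝ) := Int.cast_le.mpr h3
  push_cast at h4
  convert h4 using 2

lemma u0_disj (hr : 4 ≤ r) : RDisjoint (r : ℝ) (U0 r) := by
  rintro U ⟨I, g, rfl⟩ V ⟨I', g', rfl⟩ hne
  apply rdisjoint_of_pointwise
  rintro x ⟨hxc, hxg⟩ y ⟨hyc, hyg⟩
  by_cases hI : I = I'
  · subst hI
    have hg : g ≠ g' := by rintro rfl; exact hne rfl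
    obtain ⟨j, hj⟩ := Function.ne_iff.mp hg
    have h1 := hxg j
    have h2 := hyg j
    have hgj : (1 : ℝ) ≤ |(g j : ℝ) - (g' j : ℝ)| := int_abs_one_le hj
    have hGG : cc r ≤ |(g j : ℝ) * cc r - (g' j : ℝ) * cc r| := by
      rw [show (g j : ℝ) * cc r - (g' j : ℝ) * cc r = ((g j : ℝ) - (g' j : ℝ)) * cc r by ring,
        abs_mul, abs_of_nonneg (cc_nonneg (r := r))]
      nlinarith [cc_nonneg (r := r)]
    have htri : |(g j : ℝ) * cc r - (g' j : ℝ) * cc r| ≤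
        |(g j : ℝ) * cc r - (x.pt : Amb) j| + |(x.pt : Amb) j - (y.pt : Amb) j|
          + |(y.pt : Amb) j - (g' j : ℝ) * cc r| := by
      calc |(g j : ℝ) * cc r - (g' j : ℝ) * cc r|
          ≤ |(g j : ℝ) * cc r - (y.pt : Amb) j| + |(y.pt : Amb) j - (g' j : ℝ) * cc r| :=
            abs_sub_le _ _ _
        _ ≤ (|(g j : ℝ) * cc r - (x.pt : Amb) j| + |(x.pt : Amb) j - (y.pt : Amb) j|)
            + |(y.pt : Amb) j - (g' j : ℝ) * cc r| := by
            have := abs_sub_le ((g j : ℝ) * cc r) ((x.pt : Amb) j) ((y.pt : Amb) j)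
            linarith
    have hcd := coord_le x y j
    have hcb := cc_big (r := r) hr
    have e1 : |(g j : ℝ) * cc r - (x.pt : Amb) j| ≤ qq r := by
      rw [abs_sub_comm]; exact h1
    have e2 : |(y.pt : Amb) j - (g' j : ℝ) * cc r| ≤ qq r := h2
    unfold qq at *
    linarith
  · exact cls_dist (by rw [hxc, hyc]; exact hI)

lemma u1_disj (hr : 4 ≤ r) : RDisjoint (r : ℝ) (U1 r) := by
  rintro U ⟨I, j, a, m, rfl⟩ V ⟨I', j', a', m', rfl⟩ hne
  apply rdisjoint_of_pointwise
  rintro x ⟨hxc, hxa, hxm⟩ y ⟨hyc, hya, hym⟩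
  have hcb := cc_big (r := r) hr
  have hcn := cc_nonneg (r := r)
  by_cases hI : I = I'
  swap
  · exact cls_dist (by rw [hxc, hyc]; exact hI)
  subst hI
  by_cases hjj : j = j'
  · subst hjj
    by_cases hm : m = m'
    · subst hm
      by_cases hA : ∀ j'', j'' ≠ j → a j'' = a' j''
      · exfalso
        apply hne
        ext p
        simp only [Mid, Set.mem_setOf_eq]
        constructor
        · rintro ⟨p1, p2, p3⟩
          exact ⟨p1, fun j'' hj'' => by rw [p2 j'' hj'', hA j'' hj''], p3⟩
        · rintro ⟨p1, p2, p3⟩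
          exact ⟨p1, fun j'' hj'' => by rw [p2 j'' hj'', hA j'' hj''], p3⟩
      · push_neg at hA
        obtain ⟨j'', hj1, hj2⟩ := hA
        have h1 := hxa j'' hj1
        have h2 := hya j'' hj1
        have hgj : (1 : ℝ) ≤ |(a j'' : ℝ) - (a' j'' : ℝ)| := int_abs_one_le hj2
        have hcd := coord_le x y j''
        rw [h1, h2] at hcd
        rw [show (a j'' : ℝ) * cc r - (a' j'' : ℝ) * cc r
            = ((a j'' : ℝ) - (a' j'' : ℝ)) * cc r by ring, abs_mul,
          abs_of_nonneg hcn] at hcd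
        nlinarith
    · -- same line, different cells
      have hcd := coord_le x y j
      obtain ⟨hx1, hx2⟩ := hxm
      obtain ⟨hy1, hy2⟩ := hym
      rcases lt_or_gt_of_ne hm with h' | h'
      · have hmm : (m : ℝ) + 1 ≤ (m' : ℝ) := by exact_mod_cast h'
        have hle : (x.pt : Amb) j + 2 * qq r ≤ (y.pt : Amb) j := by
          unfold qq at *
          nlinarith
        have h5 : (y.pt : Amb) j - (x.pt : Amb) j ≤ |(x.pt : Amb) j - (y.pt : Amb) j| := by
          rw [abs_sub_comm]; exact le_abs_self _
        unfold qq at *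
        linarith
      · have hmm : (m' : ℝ) + 1 ≤ (m : ℝ) := by exact_mod_cast h'
        have hle : (y.pt : Amb) j + 2 * qq r ≤ (x.pt : Amb) j := by
          unfold qq at *
          nlinarith
        have h5 : (x.pt : Amb) j - (y.pt : Amb) j ≤ |(x.pt : Amb) j - (y.pt : Amb) j| :=
          le_abs_self _
        unfold qq at *
        linarith
  · -- different free coordinates: look at coordinate j
    have h2 : (y.pt : Amb) j = (a' j : ℝ) * cc r := hya j hjj
    obtain ⟨hx1, hx2⟩ := hxm
    have hcd := coord_le x y j
    rcases Int.lt_or_le m (a' j) with h' | h'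
    · have hble : (m : ℝ) + 1 ≤ (a' j : ℝ) := by exact_mod_cast h'
      have hstep : (x.pt : Amb) j + qq r ≤ (y.pt : Amb) j := by
        rw [h2]
        nlinarith
      have h5 : (y.pt : Amb) j - (x.pt : Amb) j ≤ |(x.pt : Amb) j - (y.pt : Amb) j| := by
        rw [abs_sub_comm]; exact le_abs_self _
      unfold qq at *
      linarith
    · have hble : (a' j : ℝ) ≤ (m : ℝ) := by exact_mod_cast h'
      have hstep : (y.pt : Amb) j + qq r ≤ (x.pt : Amb) j := by
        rw [h2]
        nlinarith
      have h5 : (x.pt : Amb) j - (y.pt : Amb) j ≤ |(x.pt : Amb) j - (y.pt : Amb) j| :=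
        le_abs_self _
      unfold qq at *
      linarith

lemma u0_bdd (hr : 4 ≤ r) : UniformlyBdd (U0 r) := by
  refine ⟨2 * qq r + r, ?_⟩
  rintro U ⟨I, g, rfl⟩ x ⟨hxc, hxg⟩ y ⟨hyc, hyg⟩
  rw [dist_eq']
  have h1 : dist (x.pt : Amb) (y.pt : Amb) ≤ 2 * qq r := by
    rw [BoundedContinuousFunction.dist_le (by unfold qq; positivity)]
    intro j
    rw [Real.dist_eq]
    have h1 := hxg j
    have h2 := hyg j
    have h3 := abs_sub_le ((x.pt : Amb) j) ((g j : ℝ) * cc r) ((y.pt : Amb) j)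
    rw [abs_sub_comm ((g j : ℝ) * cc r) ((y.pt : Amb) j)] at h3
    linarith
  have h2 := cls_tri (p := x) (p' := y) (by rw [hxc, hyc])
  linarith

lemma u1_bdd (hr : 4 ≤ r) : UniformlyBdd (U1 r) := by
  refine ⟨cc r + r, ?_⟩
  rintro U ⟨I, j, a, m, rfl⟩ x ⟨hxc, hxa, hxm⟩ y ⟨hyc, hya, hym⟩
  rw [dist_eq']
  have hcn := cc_nonneg (r := r)
  have h1 : dist (x.pt : Amb) (y.pt : Amb) ≤ cc r := by
    rw [BoundedContinuousFunction.dist_le hcn]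
    intro j'
    rw [Real.dist_eq]
    by_cases hj : j' = j
    · subst hj
      obtain ⟨hx1, hx2⟩ := hxm
      obtain ⟨hy1, hy2⟩ := hym
      rw [abs_le]
      have hq : (0:ℝ) ≤ qq r := by unfold qq; positivity
      constructor <;> nlinarith
    · rw [hxa j' hj, hya j' hj]
      simp [hcn]
  have h2 := cls_tri (p := x) (p' := y) (by rw [hxc, hyc])
  linarith

lemma covers (hr : 4 ≤ r) : Covers (U0 r ∪ U1 r) := by
  intro p
  obtain ⟨hsupp, hcard⟩ := pt_mem p
  have hcpos : (0:ℝ) < cc r := by unfold cc; positivity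
  have hqpos : (0:ℝ) < qq r := by unfold qq; positivity
  by_cases hcase : ∃ j, ∀ b : ℤ, qq r < |(p.pt : Amb) j - (b : ℝ) * cc r|
  · -- middle segment case
    obtain ⟨j, hj⟩ := hcase
    have hji : j < p.idx := by
      by_contra hge
      have h0 := hj 0
      rw [hsupp j (by omega)] at h0
      simp only [Int.cast_zero, zero_mul, sub_zero, abs_zero] at h0
      linarith
    have hjmult : ¬ IsMultiple r ((p.pt : Amb) j) := by
      rintro ⟨b, hb⟩
      have h0 := hj b
      rw [hb] at h0
      have : ((b:ℝ) * 2 ^ r - (b:ℝ) * cc r) = 0 := by unfold cc; ring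
      rw [this, abs_zero] at h0
      linarith
    have hothers : ∀ j', j' ≠ j → ∃ b : ℤ, (p.pt : Amb) j' = (b : ℝ) * cc r := by
      intro j' hj'
      rcases Nat.lt_or_ge j' p.idx with hlt | hge
      · by_contra hnm
        push_neg at hnm
        have hmult : ¬ IsMultiple r ((p.pt : Amb) j') := by
          rintro ⟨b, hb⟩
          exact hnm b (by rw [hb]; unfold cc; ring)
        have hsub : ({j, j'} : Set ℕ) ⊆ {j'' | j'' < p.idx ∧ ¬ IsMultiple r ((p.pt : Amb) j'')} := by
          intro t ht
          simp only [Set.mem_insert_iff, Set.mem_singleton_iff] at ht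
          rcases ht with ht | ht
          · subst ht; exact ⟨hji, hjmult⟩
          · subst ht; exact ⟨hlt, hmult⟩
        have hfin : {j'' | j'' < p.idx ∧ ¬ IsMultiple r ((p.pt : Amb) j'')}.Finite :=
          (Set.finite_Iio p.idx).subset (fun t ht => ht.1)
        have hpair : ({j, j'} : Set ℕ).ncard = 2 := Set.ncard_pair (Ne.symm hj')
        have h2 : 2 ≤ {j'' | j'' < p.idx ∧ ¬ IsMultiple r ((p.pt : Amb) j'')}.ncard := by
          rw [← hpair]
          exact Set.ncard_le_ncard hsub hfin
        omega
      · exact ⟨0, by rw [hsupp j' hge]; simp⟩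
    choose a ha using hothers
    set m : ℤ := ⌊(p.pt : Amb) j / cc r⌋ with hm
    have hfl : (m : ℝ) * cc r ≤ (p.pt : Amb) j := by
      rw [hm]
      have h0 := Int.floor_le ((p.pt : Amb) j / cc r)
      calc (⌊(p.pt : Amb) j / cc r⌋ : ℝ) * cc r ≤ (p.pt : Amb) j / cc r * cc r := by nlinarith
        _ = (p.pt : Amb) j := by field_simp
    have hfu : (p.pt : Amb) j < ((m : ℝ) + 1) * cc r := by
      rw [hm]
      have h0 := Int.lt_floor_add_one ((p.pt : Amb) j / cc r)
      calc (p.pt : Amb) j = (p.pt : Amb) j / cc r * cc r := by field_simp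
        _ < ((⌊(p.pt : Amb) j / cc r⌋ : ℝ) + 1) * cc r := by nlinarith
    have hb1 := hj m
    have hb2 := hj (m + 1)
    push_cast at hb2
    have hI1 : (m : ℝ) * cc r + qq r ≤ (p.pt : Amb) j := by
      have habs : |(p.pt : Amb) j - (m : ℝ) * cc r| = (p.pt : Amb) j - (m : ℝ) * cc r :=
        abs_of_nonneg (by linarith)
      rw [habs] at hb1
      linarith
    have hI2 : (p.pt : Amb) j ≤ ((m : ℝ) + 1) * cc r - qq r := by
      have habs : |(p.pt : Amb) j - ((m : ℝ) + 1) * cc r|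
          = ((m : ℝ) + 1) * cc r - (p.pt : Amb) j := by
        rw [abs_of_nonpos (by linarith)]
        ring
      rw [habs] at hb2
      linarith
    refine ⟨Mid r (cls p) j (fun j' => if h : j' = j then 0 else a j' h) m,
      Or.inr ⟨cls p, j, _, m, rfl⟩, rfl, ?_, ?_⟩
    · intro j' hj'
      simp only [dif_neg hj']
      exact ha j' hj'
    · rw [Set.mem_Icc]
      exact ⟨hI1, hI2⟩
  · -- star case
    push_neg at hcase
    choose g hg using hcase
    exact ⟨Star r (cls p) g, Or.inl ⟨cls p, g, rfl⟩, rfl, hg⟩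

end S3

/-- For every natural number `r ≥ 4`, taking `n = r`, there exist
`r`-disjoint uniformly bounded families `𝒰₀`, `𝒰₁` of subsets of
`as⊔_{i=n}^∞ X_{ω+1}^{(i,n)}` such that `𝒰₀ ∪ 𝒰₁` covers it. -/
theorem statement_3 (r : ℕ) (hr : 4 ≤ r) :
    ∃ 𝒰₀ 𝒰₁ : Set (Set (XTail 1 r)),
      UniformlyBdd 𝒰₀ ∧ UniformlyBdd 𝒰₁ ∧
      RDisjoint (r : ℝ) 𝒰₀ ∧ RDisjoint (r : ℝ) 𝒰₁ ∧
      Covers (𝒰₀ ∪ 𝒰₁) := by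
  exact ⟨S3.U0 r, S3.U1 r, S3.u0_bdd hr, S3.u1_bdd hr, S3.u0_disj hr, S3.u1_disj hr,
    S3.covers hr⟩

end
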